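/- Let m ≥ 1 and let H be a real Hadamard matrix of order 4m+4 in Hall-set form: with rows and columns indexed by {1,2,3,4} ⊔ ({1,2,3,4} × {1,…,m}), the top-left 4 × 4 block equals 2I₄ − J₄; the first four rows satisfy H(i,(t,u)) = B(i,t) for all u, where B is the 4 × 4 matrix with rows (1,1,1,−1), (1,−1,−1,−1), (1,−1,1,1), (1,1,−1,1); and the first four columns satisfy H((t,u),i) = C(t,i) for all u, where C is the 4 × 4 matrix with rows (1,1,1,1), (−1,1,1,−1), (−1,1,−1,1), (1,1,−1,−1). Then for any j ∈ {1,2,3,4}, the matrix K obtained from H by negating every entry H(i,(j,u)) with i ∈ {1,2,3,4} (the j-th 4 × m block in the first four rows) and simultaneously negating every entry H((j,u),i) with i ∈ {1,2,3,4} (the j-th m × 4 block in the first four columns), leaving all other entries unchanged, is a real Hadamard matrix of order 4m+4. -/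

import Mathlib

set_option maxHeartbeats 2000000


/-- Switching a Hall set: if a real Hadamard matrix of order `4m+4` (rows and columns
indexed by `Fin 4 ⊕ (Fin 4 × Fin m)`) is in Hall-set form — top-left block `2I₄ - J₄`,
first four rows given by `B ⊗ j_m` and first four columns by `Cᵀ ⊗ j_mᵀ` — then negating
the `j₀`-th `4 × m` block in the first four rows and simultaneously the `j₀`-th `m × 4`
block in the first four columns yields a real Hadamard matrix of order `4m+4`. -/
theorem stmt_19 (m : ℕ) (hm : 1 ≤ m)
    (B C : Matrix (Fin 4) (Fin 4) ℝ)
    (hB : B = !![1, 1, 1, -1; 1, -1, -1, -1; 1, -1, 1, 1; 1, 1, -1, 1])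
    (hC : C = !![1, 1, 1, 1; -1, 1, 1, -1; -1, 1, -1, 1; 1, 1, -1, -1])
    (H : Matrix (Fin 4 ⊕ Fin 4 × Fin m) (Fin 4 ⊕ Fin 4 × Fin m) ℝ)
    (hent : ∀ p q, H p q = 1 ∨ H p q = -1)
    (hHad : H * H.transpose = ((4 * m + 4 : ℕ) : ℝ) • 1)
    (hTL : ∀ i i' : Fin 4, H (Sum.inl i) (Sum.inl i') = if i = i' then 1 else -1)
    (hTR : ∀ (i t : Fin 4) (u : Fin m), H (Sum.inl i) (Sum.inr (t, u)) = B i t)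
    (hBL : ∀ (t : Fin 4) (u : Fin m) (i : Fin 4), H (Sum.inr (t, u)) (Sum.inl i) = C t i)
    (j₀ : Fin 4)
    (K : Matrix (Fin 4 ⊕ Fin 4 × Fin m) (Fin 4 ⊕ Fin 4 × Fin m) ℝ)
    (hKTL : ∀ i i' : Fin 4, K (Sum.inl i) (Sum.inl i') = H (Sum.inl i) (Sum.inl i'))
    (hKTR : ∀ (i t : Fin 4) (u : Fin m), K (Sum.inl i) (Sum.inr (t, u)) =
      if t = j₀ then -H (Sum.inl i) (Sum.inr (t, u)) else H (Sum.inl i) (Sum.inr (t, u)))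
    (hKBL : ∀ (t : Fin 4) (u : Fin m) (i : Fin 4), K (Sum.inr (t, u)) (Sum.inl i) =
      if t = j₀ then -H (Sum.inr (t, u)) (Sum.inl i) else H (Sum.inr (t, u)) (Sum.inl i))
    (hKBR : ∀ (t t' : Fin 4) (u u' : Fin m),
      K (Sum.inr (t, u)) (Sum.inr (t', u')) = H (Sum.inr (t, u)) (Sum.inr (t', u'))) :
    (∀ p q, K p q = 1 ∨ K p q = -1) ∧
      K * K.transpose = ((4 * m + 4 : ℕ) : ℝ) • 1 := by
  have expand : ∀ (M : Matrix (Fin 4 ⊕ Fin 4 × Fin m) (Fin 4 ⊕ Fin 4 × Fin m) ℝ) p q,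
      (M * M.transpose) p q =
        (∑ i' : Fin 4, M p (Sum.inl i') * M q (Sum.inl i')) +
        ∑ t : Fin 4, ∑ u : Fin m, M p (Sum.inr (t, u)) * M q (Sum.inr (t, u)) := by
    intro M p q
    rw [Matrix.mul_apply, Fintype.sum_sum_type, Fintype.sum_prod_type]
    simp [Matrix.transpose_apply]
  have symm : ∀ (M : Matrix (Fin 4 ⊕ Fin 4 × Fin m) (Fin 4 ⊕ Fin 4 × Fin m) ℝ) p q,
      (M * M.transpose) p q = (M * M.transpose) q p := by
    intro M p q
    rw [Matrix.mul_apply, Matrix.mul_apply]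
    exact Finset.sum_congr rfl fun j _ => by simp [Matrix.transpose_apply, mul_comm]
  constructor
  · intro p q
    rcases p with i | ⟨t, u⟩ <;> rcases q with i' | ⟨t', u'⟩
    · rw [hKTL]; exact hent _ _
    · rw [hKTR]
      rcases hent (Sum.inl i) (Sum.inr (t', u')) with h | h <;> rw [h] <;>
        split_ifs <;> norm_num
    · rw [hKBL]
      rcases hent (Sum.inr (t, u)) (Sum.inl i') with h | h <;> rw [h] <;>
        split_ifs <;> norm_num
    · rw [hKBR]; exact hent _ _
  · suffices hKH : K * K.transpose = H * H.transpose by rw [hKH, hHad]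
    have key : ∀ (i t' : Fin 4) (u' : Fin m),
        (K * K.transpose) (Sum.inl i) (Sum.inr (t', u')) =
        (H * H.transpose) (Sum.inl i) (Sum.inr (t', u')) := by
      intro i t' u'
      have E : ∀ k : Fin 4,
          (∑ i' : Fin 4, H (Sum.inl k) (Sum.inl i') * H (Sum.inr (t', u')) (Sum.inl i')) +
          ∑ t : Fin 4, ∑ u : Fin m,
            H (Sum.inl k) (Sum.inr (t, u)) * H (Sum.inr (t', u')) (Sum.inr (t, u)) = 0 := by
        intro k
        rw [← expand, hHad]
        simp [Matrix.one_apply]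
      rw [expand, expand]
      simp only [hKTL, hKTR, hKBL, hKBR, hTL, hTR, hBL] at E ⊢
      simp only [← Finset.mul_sum] at E ⊢
      have E0 := E 0; have E1 := E 1; have E2 := E 2; have E3 := E 3
      clear E
      have h4 : ∀ x : Fin 4, x = 0 ∨ x = 1 ∨ x = 2 ∨ x = 3 := by decide
      rcases h4 t' with rfl | rfl | rfl | rfl <;>
        [ (have hS : ∀ t : Fin 4, (∑ u : Fin m, H (Sum.inr ((0:Fin 4), u')) (Sum.inr (t, u))) =
              if t = 0 then 2 else 0 := ?_);
          (have hS : ∀ t : Fin 4, (∑ u : Fin m, H (Sum.inr ((1:Fin 4), u')) (Sum.inr (t, u))) =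
              if t = 1 then 2 else 0 := ?_);
          (have hS : ∀ t : Fin 4, (∑ u : Fin m, H (Sum.inr ((2:Fin 4), u')) (Sum.inr (t, u))) =
              if t = 2 then 2 else 0 := ?_);
          (have hS : ∀ t : Fin 4, (∑ u : Fin m, H (Sum.inr ((3:Fin 4), u')) (Sum.inr (t, u))) =
              if t = 3 then 2 else 0 := ?_) ] <;>
      first
      | -- main goal using hS
        (simp only [hS] at *
         rcases h4 i with rfl | rfl | rfl | rfl <;>
           rcases h4 j₀ with rfl | rfl | rfl | rfl <;>
             norm_num +decide [hB, hC, Fin.sum_univ_four,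
               Matrix.cons_val_two, Matrix.cons_val_three, Matrix.vecHead, Matrix.vecTail])
      | -- proof of hS
        (norm_num [hB, hC, Fin.sum_univ_four, Fin.ext_iff,
           show ((3:Fin 4) : ℕ) = 3 from rfl, Matrix.cons_val_two, Matrix.cons_val_three, Matrix.vecHead, Matrix.vecTail] at E0 E1 E2 E3
         intro t
         rcases h4 t with rfl | rfl | rfl | rfl <;>
           norm_num [Fin.ext_iff, show ((3:Fin 4) : ℕ) = 3 from rfl] <;>
             linarith [E0, E1, E2, E3])
    ext p q
    rcases p with i | ⟨t, u⟩ <;> rcases q with i' | ⟨t', u'⟩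
    · rw [expand, expand]
      congr 1
      · exact Finset.sum_congr rfl fun x _ => by rw [hKTL, hKTL]
      · refine Finset.sum_congr rfl fun a _ => Finset.sum_congr rfl fun b _ => ?_
        rw [hKTR, hKTR]; split_ifs <;> ring
    · exact key i t' u'
    · rw [symm K, symm H]; exact key i' t u
    · rw [expand, expand]
      congr 1
      · simp only [hKBL, hBL]
        rcases eq_or_ne t t' with rfl | hne
        · exact Finset.sum_congr rfl fun x _ => by split_ifs <;> ring
        · have Corth : ∑ i'' : Fin 4, C t i'' * C t' i'' = 0 := by
            have h4 : ∀ x : Fin 4, x = 0 ∨ x = 1 ∨ x = 2 ∨ x = 3 := by decide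
            rcases h4 t with rfl | rfl | rfl | rfl <;>
              rcases h4 t' with rfl | rfl | rfl | rfl <;>
                first
                | exact absurd rfl hne
                | norm_num [hC, Fin.sum_univ_four, Matrix.cons_val_two, Matrix.cons_val_three, Matrix.vecHead, Matrix.vecTail]
          split_ifs with h1 h2 h2
          · exact absurd (h1.trans h2.symm) hne
          · simp only [neg_mul, Finset.sum_neg_distrib, Corth, neg_zero]
          · simp only [mul_neg, Finset.sum_neg_distrib, Corth, neg_zero]
          · rfl
      · exact Finset.sum_congr rfl fun a _ => Finset.sum_congr rfl fun b _ => by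
          rw [hKBR, hKBR]
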